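/- Let A be a Banach algebra such that every cyclic bounded derivation D : A → A* is weakly compact. If the topological center Z(A**) = {G ∈ A** : F ↦ G □ F is weak*-weak* continuous} (a closed subalgebra of (A**, □)) is approximately cyclic amenable, then A is approximately cyclic amenable. -/

import Mathlib

open Filter Topology

set_option synthInstance.maxHeartbeats 1000000
set_option maxHeartbeats 1600000

noncomputable section

universe u v

variable {A : Type u} [NonUnitalNormedRing A] [NormedSpace ℂ A]
  [IsScalarTower ℂ A A] [SMulCommClass ℂ A A]

/-- The left module action of `A` on its dual `A*`: `(a · f) b = f (b * a)`. -/
def lAct (a : A) (f : A →L[ℂ] ℂ) : A →L[ℂ] ℂ :=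
  f.comp ((ContinuousLinearMap.mul ℂ A).flip a)

/-- The right module action of `A` on its dual `A*`: `(f · a) b = f (a * b)`. -/
def rAct (f : A →L[ℂ] ℂ) (a : A) : A →L[ℂ] ℂ :=
  f.comp (ContinuousLinearMap.mul ℂ A a)

/-- A bounded linear `D : A → A*` is a derivation if `D (a * b) = D a · b + a · D b`. -/
def IsDerivation (D : A →L[ℂ] (A →L[ℂ] ℂ)) : Prop :=
  ∀ a b : A, D (a * b) = rAct (D a) b + lAct a (D b)

/-- A derivation `D : A → A*` is cyclic if `⟨D a, b⟩ + ⟨D b, a⟩ = 0` for all `a, b`. -/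
def IsCyclicDeriv (D : A →L[ℂ] (A →L[ℂ] ℂ)) : Prop :=
  ∀ a b : A, D a b + D b a = 0

/-- `D : A → A*` is approximately inner if there is a net `(f i)` in `A*` with
`D a = lim_i (a · f i - f i · a)` in norm, for every `a ∈ A`. -/
def IsApproxInner {A : Type u} [NonUnitalNormedRing A] [NormedSpace ℂ A]
    [IsScalarTower ℂ A A] [SMulCommClass ℂ A A] (D : A →L[ℂ] (A →L[ℂ] ℂ)) : Prop :=
  ∃ (ι : Type u) (l : Filter ι) (f : ι → (A →L[ℂ] ℂ)), l.NeBot ∧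
    ∀ a : A, Tendsto (fun i => lAct a (f i) - rAct (f i) a) l (𝓝 (D a))

/-- `D : A → A*` is inner if `D a = a · f - f · a` for some fixed `f ∈ A*`. -/
def IsInner (D : A →L[ℂ] (A →L[ℂ] ℂ)) : Prop :=
  ∃ f : A →L[ℂ] ℂ, ∀ a : A, D a = lAct a f - rAct f a

/-- A Banach algebra is approximately cyclic amenable if every cyclic bounded
derivation `D : A → A*` is approximately inner. -/
def ApproxCyclicAmenable (A : Type u) [NonUnitalNormedRing A] [NormedSpace ℂ A]
    [IsScalarTower ℂ A A] [SMulCommClass ℂ A A] : Prop :=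
  ∀ D : A →L[ℂ] (A →L[ℂ] ℂ), IsDerivation D → IsCyclicDeriv D → IsApproxInner D

/-- A Banach algebra is cyclic amenable if every cyclic bounded derivation
`D : A → A*` is inner. -/
def CyclicAmenable (A : Type u) [NonUnitalNormedRing A] [NormedSpace ℂ A]
    [IsScalarTower ℂ A A] [SMulCommClass ℂ A A] : Prop :=
  ∀ D : A →L[ℂ] (A →L[ℂ] ℂ), IsDerivation D → IsCyclicDeriv D → IsInner D

/-- The bidual of `A`; below we install the first Arens product on it. -/
abbrev Bidual (A : Type u) [NormedAddCommGroup A] [NormedSpace ℂ A] : Type u :=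
  (A →L[ℂ] ℂ) →L[ℂ] ℂ

namespace Bidual

variable (A)

/-- `f ↦ (a ↦ f · a)` where `(f · a) b = f (a * b)`, as a continuous bilinear map. -/
def rActL : (A →L[ℂ] ℂ) →L[ℂ] A →L[ℂ] (A →L[ℂ] ℂ) :=
  (((ContinuousLinearMap.compL ℂ A (A →L[ℂ] A) (A →L[ℂ] ℂ)).flip
      (ContinuousLinearMap.mul ℂ A)).comp
    (ContinuousLinearMap.compL ℂ A A ℂ))

@[simp] lemma rActL_apply (f : A →L[ℂ] ℂ) (a b : A) : rActL A f a b = f (a * b) := rfl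

/-- The action `G · f` of the bidual on the dual: `(G · f) a = G (f · a)`. -/
def dotAct (G : Bidual A) : (A →L[ℂ] ℂ) →L[ℂ] (A →L[ℂ] ℂ) :=
  (ContinuousLinearMap.compL ℂ A (A →L[ℂ] ℂ) ℂ G).comp (rActL A)

@[simp] lemma dotAct_apply (G : Bidual A) (f : A →L[ℂ] ℂ) (a : A) :
    dotAct A G f a = G (rActL A f a) := rfl

variable {A}

/-- The first Arens product on the bidual: `⟨F □ G, f⟩ = ⟨F, G · f⟩`. -/
instance : Mul (Bidual A) := ⟨fun F G => F.comp (dotAct A G)⟩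

@[simp] lemma mul_apply (F G : Bidual A) (f : A →L[ℂ] ℂ) :
    (F * G) f = F (dotAct A G f) := rfl

lemma dotAct_add (G H : Bidual A) : dotAct A (G + H) = dotAct A G + dotAct A H := by
  refine ContinuousLinearMap.ext fun g => ContinuousLinearMap.ext fun a => ?_
  simp

lemma dotAct_zero : dotAct A (0 : Bidual A) = 0 := by
  refine ContinuousLinearMap.ext fun g => ContinuousLinearMap.ext fun a => ?_
  simp

lemma dotAct_smul (c : ℂ) (G : Bidual A) : dotAct A (c • G) = c • dotAct A G := by
  refine ContinuousLinearMap.ext fun g => ContinuousLinearMap.ext fun a => ?_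
  simp

instance instNonUnitalRing : NonUnitalRing (Bidual A) where
  __ := (inferInstance : AddCommGroup ((A →L[ℂ] ℂ) →L[ℂ] ℂ))
  mul := (· * ·)
  left_distrib F G H := by
    refine ContinuousLinearMap.ext fun f => ?_
    simp [dotAct_add]
  right_distrib F G H := by
    refine ContinuousLinearMap.ext fun f => ?_
    rfl
  zero_mul F := by refine ContinuousLinearMap.ext fun f => ?_; rfl
  mul_zero F := by
    refine ContinuousLinearMap.ext fun f => ?_
    simp [dotAct_zero]
  mul_assoc F G H := by
    refine ContinuousLinearMap.ext fun f => ?_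
    show F _ = F _
    congr 1
    refine ContinuousLinearMap.ext fun a => ?_
    show G _ = G _
    congr 1
    refine ContinuousLinearMap.ext fun b => ?_
    show H _ = H _
    congr 1
    refine ContinuousLinearMap.ext fun c => ?_
    exact congrArg f (mul_assoc a b c)

lemma norm_dotAct_apply_le (G : Bidual A) (f : A →L[ℂ] ℂ) :
    ‖dotAct A G f‖ ≤ ‖G‖ * ‖f‖ := by
  refine ContinuousLinearMap.opNorm_le_bound _ (by positivity) fun a => ?_
  calc ‖G (rActL A f a)‖ ≤ ‖G‖ * ‖rActL A f a‖ := G.le_opNorm _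
    _ ≤ ‖G‖ * (‖f‖ * ‖a‖) := by
        refine mul_le_mul_of_nonneg_left ?_ (norm_nonneg G)
        refine ContinuousLinearMap.opNorm_le_bound _ (by positivity) fun b => ?_
        calc ‖f (a * b)‖ ≤ ‖f‖ * ‖a * b‖ := f.le_opNorm _
          _ ≤ ‖f‖ * (‖a‖ * ‖b‖) :=
              mul_le_mul_of_nonneg_left (norm_mul_le a b) (norm_nonneg f)
          _ = ‖f‖ * ‖a‖ * ‖b‖ := by ring
    _ = ‖G‖ * ‖f‖ * ‖a‖ := by ring

instance instNonUnitalNormedRing : NonUnitalNormedRing (Bidual A) where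
  __ := instNonUnitalRing
  __ := (inferInstance : NormedAddCommGroup ((A →L[ℂ] ℂ) →L[ℂ] ℂ))
  norm_mul_le F G := by
    refine ContinuousLinearMap.opNorm_le_bound _ (by positivity) fun f => ?_
    calc ‖F (dotAct A G f)‖ ≤ ‖F‖ * ‖dotAct A G f‖ := F.le_opNorm _
      _ ≤ ‖F‖ * (‖G‖ * ‖f‖) :=
          mul_le_mul_of_nonneg_left (norm_dotAct_apply_le G f) (norm_nonneg F)
      _ = ‖F‖ * ‖G‖ * ‖f‖ := by ring

instance : IsScalarTower ℂ (Bidual A) (Bidual A) where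
  smul_assoc c F G := by
    refine ContinuousLinearMap.ext fun f => ?_
    rfl

instance : SMulCommClass ℂ (Bidual A) (Bidual A) where
  smul_comm c F G := by
    refine ContinuousLinearMap.ext fun f => ?_
    show c • (F (dotAct A G f)) = F (dotAct A (c • G) f)
    rw [dotAct_smul]
    simp

end Bidual

/-- A bounded linear operator between normed spaces is weakly compact if the image of the
closed unit ball is relatively compact in the weak topology of the codomain. -/
def IsWeaklyCompactOp {E : Type u} {F : Type v} [NormedAddCommGroup E] [NormedSpace ℂ E]
    [NormedAddCommGroup F] [NormedSpace ℂ F] (T : E →L[ℂ] F) : Prop :=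
  IsCompact (closure ((toWeakSpace ℂ F) '' (T '' Metric.closedBall 0 1)))

variable (A) in
/-- The topological centre `Z(A**)` of the bidual with the first Arens product: those `G`
for which `F ↦ G □ F` is weak*-weak* continuous.  It is a subalgebra of `(A**, □)`. -/
def topCenter : NonUnitalSubalgebra ℂ (Bidual A) where
  carrier := {G : Bidual A | Continuous fun F : WeakDual ℂ (A →L[ℂ] ℂ) =>
    StrongDual.toWeakDual (G * StrongDual.toWeakDual.symm F)}
  zero_mem' := by
    show Continuous fun F : WeakDual ℂ (A →L[ℂ] ℂ) =>
      StrongDual.toWeakDual ((0 : Bidual A) * StrongDual.toWeakDual.symm F)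
    simp only [zero_mul]
    exact continuous_const
  add_mem' := fun {G₁ G₂} h₁ h₂ => by
    show Continuous fun F : WeakDual ℂ (A →L[ℂ] ℂ) =>
      StrongDual.toWeakDual ((G₁ + G₂) * StrongDual.toWeakDual.symm F)
    simp only [add_mul, map_add]
    exact Continuous.add h₁ h₂
  smul_mem' := fun c G h => by
    show Continuous fun F : WeakDual ℂ (A →L[ℂ] ℂ) =>
      StrongDual.toWeakDual ((c • G) * StrongDual.toWeakDual.symm F)
    simp only [smul_mul_assoc, map_smul]
    exact Continuous.const_smul h c
  mul_mem' := fun {G₁ G₂} h₁ h₂ => by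
    show Continuous fun F : WeakDual ℂ (A →L[ℂ] ℂ) =>
      StrongDual.toWeakDual ((G₁ * G₂) * StrongDual.toWeakDual.symm F)
    have key : (fun F : WeakDual ℂ (A →L[ℂ] ℂ) =>
          StrongDual.toWeakDual ((G₁ * G₂) * StrongDual.toWeakDual.symm F))
        = (fun W : WeakDual ℂ (A →L[ℂ] ℂ) =>
            StrongDual.toWeakDual (G₁ * StrongDual.toWeakDual.symm W)) ∘
          (fun F : WeakDual ℂ (A →L[ℂ] ℂ) =>
            StrongDual.toWeakDual (G₂ * StrongDual.toWeakDual.symm F)) := by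
      funext F
      simp only [Function.comp_apply, LinearEquiv.symm_apply_apply]
      rw [mul_assoc]
    rw [key]
    exact Continuous.comp h₁ h₂

noncomputable instance : NonUnitalNormedRing ↥(topCenter A) := inferInstance

noncomputable instance : NormedSpace ℂ ↥(topCenter A) :=
  @SubmoduleClass.toNormedSpace (NonUnitalSubalgebra ℂ (Bidual A)) ℂ ℂ (Bidual A) _ _ _ _ _ _ _ _ _ _ (topCenter A)

instance : IsScalarTower ℂ ↥(topCenter A) ↥(topCenter A) := inferInstance

instance : SMulCommClass ℂ ↥(topCenter A) ↥(topCenter A) := inferInstance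

namespace ACA

open NormedSpace StrongDual

variable (A) in
/-- The canonical embedding of `A` into its bidual. -/
def Jc : A →L[ℂ] Bidual A := NormedSpace.inclusionInDoubleDual ℂ A

@[simp] lemma Jc_apply (a : A) (f : A →L[ℂ] ℂ) : Jc A a f = f a := rfl

lemma Jc_mul (a b : A) : Jc A (a * b) = Jc A a * Jc A b := by
  ext f; rfl

/-- The adjoint `D* : A** → A*` of `D : A → A*`. -/
def Dst (D : A →L[ℂ] (A →L[ℂ] ℂ)) : Bidual A →L[ℂ] (A →L[ℂ] ℂ) :=
  (ContinuousLinearMap.compL ℂ A (A →L[ℂ] ℂ) ℂ).flip D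

@[simp] lemma Dst_apply (D : A →L[ℂ] (A →L[ℂ] ℂ)) (G : Bidual A) (a : A) :
    Dst D G a = G (D a) := rfl

lemma rAct_eq (f : A →L[ℂ] ℂ) (a : A) : rAct f a = Bidual.rActL A f a := by
  ext b; rfl

lemma lAct_eq (a : A) (f : A →L[ℂ] ℂ) : lAct a f = Bidual.dotAct A (Jc A a) f := by
  ext b; rfl

/-- Exact finite interpolation with norm control (a Helly-type lemma). -/
lemma interp (H : Bidual A) {r : ℝ} (hr : ‖H‖ < r) (I : Finset (A →L[ℂ] ℂ)) :
    ∃ a : A, ‖a‖ ≤ r ∧ ∀ f ∈ I, f a = H f := by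
  classical
  set L : ↥I → A →ₗ[ℂ] ℂ := fun i => ((i : A →L[ℂ] ℂ) : A →ₗ[ℂ] ℂ) with hLdef
  set T : A →ₗ[ℂ] (↥I → ℂ) := LinearMap.pi L with hTdef
  set v : ↥I → ℂ := fun i => H (i : A →L[ℂ] ℂ) with hvdef
  have hr0 : (0 : ℝ) < r := lt_of_le_of_lt (norm_nonneg H) hr
  -- Step 1 : `v` is in the range of `T`.
  have hvmem : v ∈ LinearMap.range T := by
    by_contra hv'
    set p : Submodule ℂ (↥I → ℂ) := LinearMap.range T with hpdef
    have hq : p.mkQ v ≠ 0 := by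
      rw [Submodule.mkQ_apply, Ne, Submodule.Quotient.mk_eq_zero]
      exact hv'
    obtain ⟨φ, hφ⟩ : ∃ φ : Module.Dual ℂ ((↥I → ℂ) ⧸ p), φ (p.mkQ v) ≠ 0 := by
      by_contra hcon
      push_neg at hcon
      exact hq ((Module.forall_dual_apply_eq_zero_iff ℂ _).mp hcon)
    set lam : (↥I → ℂ) →ₗ[ℂ] ℂ := φ.comp p.mkQ with hlamdef
    have hlamT : ∀ a : A, lam (T a) = 0 := by
      intro a
      have h0 : p.mkQ (T a) = 0 := by
        rw [Submodule.mkQ_apply, Submodule.Quotient.mk_eq_zero]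
        exact ⟨a, rfl⟩
      simp [hlamdef, LinearMap.comp_apply, h0]
    set c : ↥I → ℂ := fun i => lam (Pi.single i 1) with hcdef
    have hexp : ∀ x : ↥I → ℂ, lam x = ∑ i, x i * c i := by
      intro x
      have hx : (∑ i : ↥I, x i • (Pi.single i (1 : ℂ) : ↥I → ℂ)) = x := by
        funext j
        simp [Finset.sum_apply, Pi.single_apply, smul_eq_mul]
      conv_lhs => rw [← hx]
      rw [map_sum]
      simp [hcdef, smul_eq_mul]
    have hgzero : (∑ i : ↥I, c i • (i : A →L[ℂ] ℂ)) = 0 := by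
      ext a
      have h1 := hlamT a
      rw [hexp (T a)] at h1
      simpa [hTdef, LinearMap.pi_apply, hLdef, mul_comm] using h1
    have h2 : lam v = 0 := by
      have h3 := congrArg (fun g : A →L[ℂ] ℂ => H g) hgzero
      simp only [map_sum, map_smul, map_zero, smul_eq_mul] at h3
      rw [hexp v]
      rw [show (∑ i : ↥I, v i * c i) = ∑ i : ↥I, c i * H (i : A →L[ℂ] ℂ) from
        Finset.sum_congr rfl fun i _ => by rw [hvdef]; ring]
      exact h3
    exact hφ (by simpa [hlamdef] using h2)
  obtain ⟨a₀, ha₀⟩ := hvmem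
  have hcoord : ∀ i : ↥I, (i : A →L[ℂ] ℂ) a₀ = H (i : A →L[ℂ] ℂ) := by
    intro i
    have h := congrFun ha₀ i
    simpa [hTdef, LinearMap.pi_apply, hLdef, hvdef] using h
  -- Step 2 : quotient norm estimate.
  set N : Submodule ℂ A := ⨅ i : ↥I, LinearMap.ker (L i) with hNdef
  have hmemN : ∀ x : A, x ∈ N ↔ ∀ i : ↥I, (i : A →L[ℂ] ℂ) x = 0 := by
    intro x
    simp [hNdef, Submodule.mem_iInf, hLdef, LinearMap.mem_ker]
  haveI hNclosed : IsClosed (N : Set A) := by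
    have hset : (N : Set A) = ⋂ i : ↥I, {x : A | (i : A →L[ℂ] ℂ) x = 0} := by
      ext x
      simp [hmemN x, Set.mem_iInter]
    rw [hset]
    exact isClosed_iInter fun i => isClosed_eq (i : A →L[ℂ] ℂ).continuous continuous_const
  by_cases hx0 : N.mkQ a₀ = 0
  · refine ⟨0, by simpa using hr0.le, ?_⟩
    intro f hf
    have haN : a₀ ∈ N := by
      rwa [Submodule.mkQ_apply, Submodule.Quotient.mk_eq_zero] at hx0
    have hfa : f a₀ = 0 := (hmemN a₀).1 haN ⟨f, hf⟩
    have hHf : H f = 0 := by rw [← hcoord ⟨f, hf⟩]; exact hfa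
    simp [hHf]
  · obtain ⟨ψ, hψn, hψx⟩ := exists_dual_vector ℂ (N.mkQ a₀) (norm_ne_zero_iff.2 hx0)
    set φ₀ : A →ₗ[ℂ] ℂ := (ψ : (A ⧸ N) →ₗ[ℂ] ℂ).comp N.mkQ with hφdef
    have hker : (⨅ i : ↥I, LinearMap.ker (L i)) ≤ LinearMap.ker φ₀ := by
      intro x hx
      have h0 : N.mkQ x = 0 := by
        rw [Submodule.mkQ_apply, Submodule.Quotient.mk_eq_zero]
        exact hNdef ▸ hx
      simp [hφdef, LinearMap.mem_ker, LinearMap.comp_apply, h0]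
    obtain ⟨c, hc⟩ := (Submodule.mem_span_range_iff_exists_fun ℂ).1 (mem_span_of_iInf_ker_le_ker hker)
    set g : A →L[ℂ] ℂ := ∑ i : ↥I, c i • (i : A →L[ℂ] ℂ) with hgdef
    have hga : ∀ x : A, g x = ψ (N.mkQ x) := by
      intro x
      have h := congrFun (congrArg (fun m : A →ₗ[ℂ] ℂ => (m : A → ℂ)) hc) x
      simpa [hgdef, hLdef, hφdef, smul_eq_mul] using h
    have hgnorm : ‖g‖ ≤ 1 := by
      refine ContinuousLinearMap.opNorm_le_bound _ zero_le_one fun x => ?_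
      rw [hga x, one_mul]
      calc ‖ψ (N.mkQ x)‖ ≤ ‖ψ‖ * ‖N.mkQ x‖ := ψ.le_opNorm _
        _ = ‖N.mkQ x‖ := by rw [hψn, one_mul]
        _ ≤ ‖x‖ := Submodule.Quotient.norm_mk_le N x
    have hval : ((‖N.mkQ a₀‖ : ℝ) : ℂ) = H g := by
      have e2 : g a₀ = ∑ i : ↥I, c i * H (i : A →L[ℂ] ℂ) := by
        rw [hgdef]
        simp only [ContinuousLinearMap.coe_sum', Finset.sum_apply,
          ContinuousLinearMap.coe_smul', Pi.smul_apply, smul_eq_mul]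
        exact Finset.sum_congr rfl fun i _ => by rw [hcoord i]
      have e1 : H g = ∑ i : ↥I, c i * H (i : A →L[ℂ] ℂ) := by
        rw [hgdef, map_sum]
        simp [smul_eq_mul]
      calc ((‖N.mkQ a₀‖ : ℝ) : ℂ) = ψ (N.mkQ a₀) := hψx.symm
        _ = g a₀ := (hga a₀).symm
        _ = ∑ i : ↥I, c i * H (i : A →L[ℂ] ℂ) := e2
        _ = H g := e1.symm
    have hx₀ : ‖N.mkQ a₀‖ ≤ ‖H‖ := by
      have hnn : ‖((‖N.mkQ a₀‖ : ℝ) : ℂ)‖ = ‖N.mkQ a₀‖ := by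
        rw [Complex.norm_real]
        exact abs_of_nonneg (norm_nonneg _)
      calc ‖N.mkQ a₀‖ = ‖((‖N.mkQ a₀‖ : ℝ) : ℂ)‖ := hnn.symm
        _ = ‖H g‖ := by rw [hval]
        _ ≤ ‖H‖ * ‖g‖ := H.le_opNorm g
        _ ≤ ‖H‖ * 1 := mul_le_mul_of_nonneg_left hgnorm (norm_nonneg H)
        _ = ‖H‖ := mul_one _
    obtain ⟨b, hb1, hb2⟩ :=
      Submodule.Quotient.norm_mk_lt (N.mkQ a₀) (show (0 : ℝ) < r - ‖H‖ by linarith)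
    refine ⟨b, by linarith, ?_⟩
    intro f hf
    have hmem : b - a₀ ∈ N := by
      rw [← Submodule.Quotient.mk_eq_zero N]
      rw [Submodule.Quotient.mk_sub, hb1, Submodule.mkQ_apply, sub_self]
    have hzero : f (b - a₀) = 0 := (hmemN _).1 hmem ⟨f, hf⟩
    have hfb : f b = f a₀ := by
      have h : f b - f a₀ = 0 := by rw [← f.map_sub]; exact hzero
      exact sub_eq_zero.mp h
    rw [hfb]
    exact hcoord ⟨f, hf⟩

lemma mem_closure_Jc (H : Bidual A) {r : ℝ} (hr : ‖H‖ < r) :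
    (toWeakDual H : WeakDual ℂ (A →L[ℂ] ℂ)) ∈
      closure ((fun a : A => toWeakDual (Jc A a)) '' Metric.closedBall 0 r) := by
  have hi : IsInducing (fun (x : WeakDual ℂ (A →L[ℂ] ℂ)) (y : A →L[ℂ] ℂ) => x y) := ⟨rfl⟩
  rw [mem_closure_iff]
  intro o ho hxo
  obtain ⟨V, hV, rfl⟩ := hi.isOpen_iff.1 ho
  obtain ⟨I, u, hu, hpi⟩ := isOpen_pi_iff.1 hV _ hxo
  obtain ⟨a, har, hafix⟩ := interp H hr I
  refine ⟨toWeakDual (Jc A a), ?_, ⟨a, ?_, rfl⟩⟩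
  · apply hpi
    intro f hf
    have h1 : (toWeakDual (Jc A a) : WeakDual ℂ (A →L[ℂ] ℂ)) f = H f := hafix f hf
    show _ ∈ u f
    show (toWeakDual (Jc A a) : WeakDual ℂ (A →L[ℂ] ℂ)) f ∈ u f
    rw [h1]
    exact (hu f hf).2
  · exact mem_closedBall_zero_iff.2 har

lemma eqOn_weakDual {φ ψ : WeakDual ℂ (A →L[ℂ] ℂ) → ℂ} (hφ : Continuous φ)
    (hψ : Continuous ψ)
    (h : ∀ a : A, φ (toWeakDual (Jc A a)) = ψ (toWeakDual (Jc A a))) (G : Bidual A) :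
    φ (toWeakDual G) = ψ (toWeakDual G) := by
  have hsub : closure ((fun a : A => toWeakDual (Jc A a)) '' Metric.closedBall 0 (‖G‖ + 1))
      ⊆ {x | φ x = ψ x} := by
    apply closure_minimal
    · rintro x ⟨a, -, rfl⟩
      exact h a
    · exact isClosed_eq hφ hψ
  exact hsub (mem_closure_Jc G (by linarith [norm_nonneg G]))

lemma bicyclic_aux (D : A →L[ℂ] (A →L[ℂ] ℂ)) (hcyc : IsCyclicDeriv D)
    (hwc : IsWeaklyCompactOp D) (H : Bidual A) (hH : ‖H‖ < 1) (G : Bidual A) :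
    G (Dst D H) + H (Dst D G) = 0 := by
  classical
  set m : A → WeakDual ℂ (A →L[ℂ] ℂ) := fun a => toWeakDual (Jc A a) with hm
  have hcl := mem_closure_Jc (A := A) H hH
  set l₁ : Filter A :=
    Filter.comap m (nhds (toWeakDual H)) ⊓ Filter.principal (Metric.closedBall 0 1) with hl₁
  haveI hl₁ne : l₁.NeBot := by
    rw [hl₁, Filter.inf_principal_neBot_iff]
    intro U hU
    rw [Filter.mem_comap] at hU
    obtain ⟨V, hV, hVU⟩ := hU
    obtain ⟨x, hxV, hxS⟩ := mem_closure_iff_nhds.1 hcl V hV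
    obtain ⟨a, haB, hax⟩ := hxS
    exact ⟨a, hVU (by show m a ∈ V; rw [show m a = x from hax]; exact hxV), haB⟩
  have htend1 : Filter.Tendsto m l₁ (nhds (toWeakDual H)) :=
    Filter.tendsto_comap.mono_left inf_le_left
  have hev1 : ∀ f : A →L[ℂ] ℂ, Filter.Tendsto (fun a : A => f a) l₁ (nhds (H f)) := by
    intro f
    have hc : Continuous fun G : WeakDual ℂ (A →L[ℂ] ℂ) => G f := WeakDual.eval_continuous f
    exact (hc.tendsto (toWeakDual H)).comp htend1
  set gD : A → WeakSpace ℂ (A →L[ℂ] ℂ) := fun a => toWeakSpace ℂ (A →L[ℂ] ℂ) (D a) with hgD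
  set Kset := closure ((toWeakSpace ℂ (A →L[ℂ] ℂ)) '' (⇑D '' Metric.closedBall 0 1)) with hKset
  have hball : ∀ᶠ a in l₁, gD a ∈ Kset := by
    have h1 : ∀ᶠ a in l₁, a ∈ Metric.closedBall (0 : A) 1 :=
      (inf_le_right : l₁ ≤ _) (Filter.mem_principal_self _)
    exact h1.mono fun a ha => subset_closure ⟨D a, ⟨a, ha, rfl⟩, rfl⟩
  have hle : Filter.map gD l₁ ≤ Filter.principal Kset :=
    Filter.le_principal_iff.2 (Filter.mem_map.2 hball)
  haveI : (Filter.map gD l₁).NeBot := hl₁ne.map gD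
  obtain ⟨ψw, hψK, hψcl⟩ := hwc.exists_clusterPt hle
  set l₂ : Filter A := l₁ ⊓ Filter.comap gD (nhds ψw) with hl₂
  haveI hl₂ne : l₂.NeBot := by
    have hpp : Filter.map gD l₂ = Filter.map gD l₁ ⊓ nhds ψw := Filter.push_pull gD l₁ (nhds ψw)
    have hne2 : (Filter.map gD l₂).NeBot := by
      rw [hpp, inf_comm]
      exact hψcl
    exact (Filter.map_neBot_iff gD).1 hne2
  have hgt2 : Filter.Tendsto gD l₂ (nhds ψw) := Filter.tendsto_comap.mono_left inf_le_right
  set psi : A →L[ℂ] ℂ := (toWeakSpace ℂ (A →L[ℂ] ℂ)).symm ψw with hpsi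
  have hev2 : ∀ Ψ : Bidual A, Filter.Tendsto (fun a : A => Ψ (D a)) l₂ (nhds (Ψ psi)) := by
    intro Ψ
    have hc : Continuous fun x : WeakSpace ℂ (A →L[ℂ] ℂ) =>
        ((topDualPairing ℂ (A →L[ℂ] ℂ)).flip x) Ψ :=
      WeakBilin.eval_continuous _ Ψ
    exact (hc.tendsto ψw).comp hgt2
  have hpsi_eq : psi = -(Dst D H) := by
    ext b
    have h1 : Filter.Tendsto (fun a : A => (D a) b) l₂ (nhds (psi b)) := hev2 (Jc A b)
    have h2 : Filter.Tendsto (fun a : A => (D a) b) l₂ (nhds (-(H (D b)))) := by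
      have h2' : Filter.Tendsto (fun a : A => (D b) a) l₂ (nhds (H (D b))) :=
        (hev1 (D b)).mono_left inf_le_left
      have h2'' := h2'.neg
      have hfun : (fun a : A => (D a) b) = fun a : A => -((D b) a) :=
        funext fun a => eq_neg_of_add_eq_zero_left (hcyc a b)
      rw [hfun]
      exact h2''
    have := tendsto_nhds_unique h1 h2
    simpa using this
  have h3 : Filter.Tendsto (fun a : A => G (D a)) l₂ (nhds (G psi)) := hev2 G
  have h4 : Filter.Tendsto (fun a : A => G (D a)) l₂ (nhds (H (Dst D G))) :=
    (hev1 (Dst D G)).mono_left inf_le_left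
  have h5 := tendsto_nhds_unique h3 h4
  rw [hpsi_eq] at h5
  have h6 : -(G (Dst D H)) = H (Dst D G) := by simpa using h5
  linear_combination -h6

lemma bicyclic (D : A →L[ℂ] (A →L[ℂ] ℂ)) (hcyc : IsCyclicDeriv D)
    (hwc : IsWeaklyCompactOp D) (G H : Bidual A) :
    G (Dst D H) + H (Dst D G) = 0 := by
  rcases eq_or_ne H 0 with rfl | hH0
  · simp
  · set c : ℂ := (((2 * ‖H‖)⁻¹ : ℝ) : ℂ) with hc
    have hH0' : (0 : ℝ) < ‖H‖ := norm_pos_iff.2 hH0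
    have hc0 : c ≠ 0 := by
      rw [hc]
      norm_cast
      positivity
    have hn : ‖c • H‖ < 1 := by
      have hb : ‖c • H‖ ≤ 2⁻¹ := by
        refine ContinuousLinearMap.opNorm_le_bound _ (by norm_num) fun f => ?_
        have e : (c • H) f = c * H f := rfl
        rw [e, norm_mul, hc, Complex.norm_real, Real.norm_eq_abs, abs_of_nonneg (by positivity)]
        calc (2 * ‖H‖)⁻¹ * ‖H f‖ ≤ (2 * ‖H‖)⁻¹ * (‖H‖ * ‖f‖) := by
              exact mul_le_mul_of_nonneg_left (H.le_opNorm f) (by positivity)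
          _ = 2⁻¹ * ‖f‖ := by field_simp
      linarith
    have h := bicyclic_aux D hcyc hwc (c • H) hn G
    rw [map_smul] at h
    have h' : c * (G (Dst D H) + H (Dst D G)) = 0 := by
      rw [mul_add]
      rw [show c * G (Dst D H) = G (c • Dst D H) from (map_smul G c (Dst D H)).symm]
      rw [show c * H (Dst D G) = (c • H) (Dst D G) from rfl]
      exact h
    exact (mul_eq_zero.mp h').resolve_left hc0

lemma Jc_mem (a : A) : Jc A a ∈ topCenter A := by
  show Continuous fun F : WeakDual ℂ (A →L[ℂ] ℂ) =>
    toWeakDual (Jc A a * toWeakDual.symm F)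
  apply WeakBilin.continuous_of_continuous_eval
  intro y
  exact WeakDual.eval_continuous (Bidual.rActL A y a)

lemma S2 (D : A →L[ℂ] (A →L[ℂ] ℂ)) (hder : IsDerivation D) (a : A) (K : Bidual A) :
    Bidual.rActL A (Dst D K) a = Bidual.dotAct A K (D a) + Dst D (K * Jc A a) := by
  ext b
  show K (D (a * b)) = K (Bidual.rActL A (D a) b) + K (Bidual.dotAct A (Jc A a) (D b))
  rw [hder a b, map_add, rAct_eq, lAct_eq]

lemma dagger (D : A →L[ℂ] (A →L[ℂ] ℂ)) (hder : IsDerivation D) (hcyc : IsCyclicDeriv D)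
    (hwc : IsWeaklyCompactOp D) (H K : Bidual A) (hK : K ∈ topCenter A) (G : Bidual A) :
    (G * H) (Dst D K) = G (Dst D (H * K)) + H (Dst D (K * G)) := by
  have hL := bicyclic D hcyc hwc
  have hbase : ∀ a : A,
      (fun W : WeakDual ℂ (A →L[ℂ] ℂ) =>
        (toWeakDual.symm W : Bidual A) (Bidual.dotAct A H (Dst D K))) (toWeakDual (Jc A a)) =
      (fun W : WeakDual ℂ (A →L[ℂ] ℂ) =>
        (toWeakDual.symm W : Bidual A) (Dst D (H * K)) -
          (K * (toWeakDual.symm W : Bidual A)) (Dst D H)) (toWeakDual (Jc A a)) := by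
    intro a
    simp only [LinearEquiv.symm_apply_apply]
    have e1 : (Jc A a) (Bidual.dotAct A H (Dst D K)) = H (Bidual.rActL A (Dst D K) a) := rfl
    have e2 : (Jc A a) (Dst D (H * K)) = H (Bidual.dotAct A K (D a)) := rfl
    have e3 : (K * Jc A a) (Dst D H) = -(H (Dst D (K * Jc A a))) := by
      linear_combination hL (K * Jc A a) H
    rw [e1, e2, e3, S2 D hder a K, map_add]
    ring
  have hcont1 : Continuous fun W : WeakDual ℂ (A →L[ℂ] ℂ) =>
      (toWeakDual.symm W : Bidual A) (Bidual.dotAct A H (Dst D K)) :=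
    WeakDual.eval_continuous _
  have hcont2 : Continuous fun W : WeakDual ℂ (A →L[ℂ] ℂ) =>
      (toWeakDual.symm W : Bidual A) (Dst D (H * K)) -
        (K * (toWeakDual.symm W : Bidual A)) (Dst D H) := by
    apply Continuous.sub
    · exact WeakDual.eval_continuous _
    · have hKc : Continuous fun F : WeakDual ℂ (A →L[ℂ] ℂ) =>
          toWeakDual (K * toWeakDual.symm F) := hK
      exact (WeakDual.eval_continuous (Dst D H)).comp hKc
  have h0 := eqOn_weakDual hcont1 hcont2 hbase G
  simp only [LinearEquiv.symm_apply_apply] at h0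
  have h1 : (G * H) (Dst D K) = G (Bidual.dotAct A H (Dst D K)) := rfl
  have h2 : H (Dst D (K * G)) = -((K * G) (Dst D H)) := by
    linear_combination hL (K * G) H
  rw [h1, h0, h2]
  ring

lemma star_id (D : A →L[ℂ] (A →L[ℂ] ℂ)) (hder : IsDerivation D) (hcyc : IsCyclicDeriv D)
    (hwc : IsWeaklyCompactOp D) (G H K : Bidual A) (hK : K ∈ topCenter A) :
    K (Dst D (G * H)) = (H * K) (Dst D G) + (K * G) (Dst D H) := by
  have h := dagger D hder hcyc hwc H K hK G
  have a1 := bicyclic D hcyc hwc (G * H) K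
  have a2 := bicyclic D hcyc hwc (H * K) G
  have a3 := bicyclic D hcyc hwc (K * G) H
  linear_combination -h + a1 - a2 - a3


@[simp] lemma rAct_apply {B : Type v} [NonUnitalNormedRing B] [NormedSpace ℂ B]
    [IsScalarTower ℂ B B] [SMulCommClass ℂ B B] (f : B →L[ℂ] ℂ) (x y : B) :
    rAct f x y = f (x * y) := rfl

@[simp] lemma lAct_apply {B : Type v} [NonUnitalNormedRing B] [NormedSpace ℂ B]
    [IsScalarTower ℂ B B] [SMulCommClass ℂ B B] (x : B) (f : B →L[ℂ] ℂ) (y : B) :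
    lAct x f y = f (y * x) := rfl

/-- The corestriction of the canonical embedding to the topological centre. -/
def jZ : A →L[ℂ] ↥(topCenter A) :=
  ⟨{ toFun := fun a => ⟨Jc A a, Jc_mem a⟩,
     map_add' := fun a b => Subtype.ext ((Jc A).map_add a b),
     map_smul' := fun c a => Subtype.ext ((Jc A).map_smul c a) },
   Continuous.subtype_mk (Jc A).continuous _⟩

@[simp] lemma jZ_coe (a : A) : ((jZ a : ↥(topCenter A)) : Bidual A) = Jc A a := rfl

@[simp] lemma coe_mul_topCenter (x y : ↥(topCenter A)) :
    ((x * y : ↥(topCenter A)) : Bidual A) = (x : Bidual A) * (y : Bidual A) := rfl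

lemma jZ_mul (a b : A) : jZ (a * b) = jZ a * jZ b := Subtype.ext (Jc_mul a b)

/-- The coercion of the topological centre into the bidual, as a continuous linear map. -/
def valZ : ↥(topCenter A) →L[ℂ] Bidual A :=
  ⟨{ toFun := Subtype.val, map_add' := fun _ _ => rfl, map_smul' := fun _ _ => rfl },
    continuous_subtype_val⟩

/-- The induced cyclic derivation on the topological centre, at a point. -/
def DtOne (D : A →L[ℂ] (A →L[ℂ] ℂ)) (G : ↥(topCenter A)) : ↥(topCenter A) →L[ℂ] ℂ :=
  ⟨{ toFun := fun K => -((K : Bidual A) (Dst D (G : Bidual A))),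
     map_add' := fun K L => by
       show -((K + L : ↥(topCenter A)) : Bidual A) (Dst D (G : Bidual A)) = _
       rw [show (((K + L : ↥(topCenter A))) : Bidual A)
           = (K : Bidual A) + (L : Bidual A) from rfl]
       simp only [ContinuousLinearMap.add_apply]
       ring,
     map_smul' := fun c K => by
       show -((c • K : ↥(topCenter A)) : Bidual A) (Dst D (G : Bidual A)) = _
       rw [show (((c • K : ↥(topCenter A))) : Bidual A) = c • (K : Bidual A) from rfl]
       simp only [ContinuousLinearMap.smul_apply, RingHom.id_apply, smul_eq_mul]
       ring },
   by
     exact Continuous.neg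
       (((NormedSpace.inclusionInDoubleDual ℂ (A →L[ℂ] ℂ)
         (Dst D (G : Bidual A)))).continuous.comp continuous_subtype_val)⟩

@[simp] lemma DtOne_apply (D : A →L[ℂ] (A →L[ℂ] ℂ)) (G K : ↥(topCenter A)) :
    DtOne D G K = -((K : Bidual A) (Dst D (G : Bidual A))) := rfl

lemma norm_coe_topCenter (K : ↥(topCenter A)) : ‖(K : Bidual A)‖ = ‖K‖ := rfl

/-- The induced cyclic derivation on the topological centre. -/
def Dt (D : A →L[ℂ] (A →L[ℂ] ℂ)) :
    ↥(topCenter A) →L[ℂ] (↥(topCenter A) →L[ℂ] ℂ) :=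
  LinearMap.mkContinuous
    { toFun := DtOne D,
      map_add' := fun G H => by
        ext K
        show -((K : Bidual A) (Dst D ((G + H : ↥(topCenter A)) : Bidual A))) = _
        rw [show (((G + H : ↥(topCenter A))) : Bidual A)
            = (G : Bidual A) + (H : Bidual A) from rfl]
        simp only [map_add, ContinuousLinearMap.add_apply, DtOne_apply]
        ring,
      map_smul' := fun c G => by
        ext K
        show -((K : Bidual A) (Dst D ((c • G : ↥(topCenter A)) : Bidual A))) = _
        rw [show (((c • G : ↥(topCenter A))) : Bidual A) = c • (G : Bidual A) from rfl]
        simp only [map_smul, ContinuousLinearMap.smul_apply, RingHom.id_apply,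
          smul_eq_mul, DtOne_apply]
        ring }
    ‖D‖
    (fun G => by
      refine ContinuousLinearMap.opNorm_le_bound _ (by positivity) fun K => ?_
      have h0 : ‖DtOne D G K‖ = ‖(K : Bidual A) (Dst D (G : Bidual A))‖ := by
        rw [DtOne_apply, norm_neg]
      have h1 : ‖Dst D (G : Bidual A)‖ ≤ ‖D‖ * ‖G‖ := by
        refine ContinuousLinearMap.opNorm_le_bound _ (by positivity) fun a => ?_
        calc ‖(G : Bidual A) (D a)‖
            ≤ ‖(G : Bidual A)‖ * ‖D a‖ := ContinuousLinearMap.le_opNorm _ _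
          _ ≤ ‖(G : Bidual A)‖ * (‖D‖ * ‖a‖) :=
              mul_le_mul_of_nonneg_left (D.le_opNorm a) (norm_nonneg _)
          _ = ‖D‖ * ‖G‖ * ‖a‖ := by rw [norm_coe_topCenter]; ring
      show ‖DtOne D G K‖ ≤ ‖D‖ * ‖G‖ * ‖K‖
      rw [h0]
      calc ‖(K : Bidual A) (Dst D (G : Bidual A))‖
          ≤ ‖(K : Bidual A)‖ * ‖Dst D (G : Bidual A)‖ :=
            ContinuousLinearMap.le_opNorm _ _
        _ ≤ ‖(K : Bidual A)‖ * (‖D‖ * ‖G‖) :=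
            mul_le_mul_of_nonneg_left h1 (norm_nonneg _)
        _ = ‖D‖ * ‖G‖ * ‖K‖ := by
            rw [norm_coe_topCenter]; ring)

@[simp] lemma Dt_apply (D : A →L[ℂ] (A →L[ℂ] ℂ)) (G H : ↥(topCenter A)) :
    Dt D G H = -((H : Bidual A) (Dst D (G : Bidual A))) := rfl

lemma Dt_isDerivation (D : A →L[ℂ] (A →L[ℂ] ℂ)) (hder : IsDerivation D)
    (hcyc : IsCyclicDeriv D) (hwc : IsWeaklyCompactOp D) : IsDerivation (Dt D) := by
  intro G H
  ext K
  have hstar := star_id D hder hcyc hwc (G : Bidual A) (H : Bidual A) (K : Bidual A) K.2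
  simp only [ContinuousLinearMap.add_apply, rAct_apply, lAct_apply, Dt_apply,
    coe_mul_topCenter]
  linear_combination -hstar

lemma Dt_isCyclic (D : A →L[ℂ] (A →L[ℂ] ℂ)) (hcyc : IsCyclicDeriv D)
    (hwc : IsWeaklyCompactOp D) : IsCyclicDeriv (Dt D) := by
  intro G H
  have h := bicyclic D hcyc hwc (G : Bidual A) (H : Bidual A)
  simp only [Dt_apply]
  linear_combination -h


end ACA
/-- Suppose every cyclic bounded derivation `D : A → A*` is weakly
compact.  If the topological centre `Z(A**)` of `(A**, □)` is approximately cyclic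
amenable, then so is `A`. -/
theorem approxCyclicAmenable_of_topCenter
    {A : Type u} [NonUnitalNormedRing A] [NormedSpace ℂ A]
    [IsScalarTower ℂ A A] [SMulCommClass ℂ A A] [CompleteSpace A]
    (hwc : ∀ D : A →L[ℂ] (A →L[ℂ] ℂ), IsDerivation D → IsCyclicDeriv D → IsWeaklyCompactOp D)
    (hZ : ApproxCyclicAmenable ↥(topCenter A)) :
    ApproxCyclicAmenable A := by
  intro D hder hcyc
  have hwcD : IsWeaklyCompactOp D := hwc D hder hcyc
  obtain ⟨ιt, l, g, hne, htend⟩ :=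
    hZ (ACA.Dt D) (ACA.Dt_isDerivation D hder hcyc hwcD) (ACA.Dt_isCyclic D hcyc hwcD)
  refine ⟨ιt, l, fun i => (g i).comp ACA.jZ, hne, ?_⟩
  intro a
  have hbase := htend (ACA.jZ a)
  rw [tendsto_iff_norm_sub_tendsto_zero] at hbase ⊢
  refine squeeze_zero (fun i => norm_nonneg _) (fun i => ?_) hbase
  refine ContinuousLinearMap.opNorm_le_bound _ (norm_nonneg _) fun b => ?_
  have e1 : lAct a ((g i).comp ACA.jZ) b = lAct (ACA.jZ a) (g i) (ACA.jZ b) := by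
    show (g i) (ACA.jZ (b * a)) = (g i) (ACA.jZ b * ACA.jZ a)
    rw [ACA.jZ_mul]
  have e2 : rAct ((g i).comp ACA.jZ) a b = rAct (g i) (ACA.jZ a) (ACA.jZ b) := by
    show (g i) (ACA.jZ (a * b)) = (g i) (ACA.jZ a * ACA.jZ b)
    rw [ACA.jZ_mul]
  have e3 : (D a) b = ACA.Dt D (ACA.jZ a) (ACA.jZ b) := by
    show (D a) b = -((D b) a)
    linear_combination hcyc a b
  have hpoint : (lAct a ((g i).comp ACA.jZ) - rAct ((g i).comp ACA.jZ) a - D a) b =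
      (lAct (ACA.jZ a) (g i) - rAct (g i) (ACA.jZ a) - ACA.Dt D (ACA.jZ a)) (ACA.jZ b) := by
    simp only [ContinuousLinearMap.sub_apply, e1, e2, e3]
  rw [hpoint]
  have hjb : ‖ACA.jZ b‖ ≤ ‖b‖ := by
    show ‖ACA.Jc A b‖ ≤ ‖b‖
    exact NormedSpace.double_dual_bound ℂ A b
  calc ‖(lAct (ACA.jZ a) (g i) - rAct (g i) (ACA.jZ a) - ACA.Dt D (ACA.jZ a)) (ACA.jZ b)‖
      ≤ ‖lAct (ACA.jZ a) (g i) - rAct (g i) (ACA.jZ a) - ACA.Dt D (ACA.jZ a)‖ * ‖ACA.jZ b‖ :=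
        ContinuousLinearMap.le_opNorm _ _
    _ ≤ ‖lAct (ACA.jZ a) (g i) - rAct (g i) (ACA.jZ a) - ACA.Dt D (ACA.jZ a)‖ * ‖b‖ :=
        mul_le_mul_of_nonneg_left hjb (norm_nonneg _)
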